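/- Let r_1 < ... < r_l with r_1 > 1 be integers, α_1,...,α_l > 0 with Σ α_i/(r_i−1)! ≤ 1, and let m, t satisfy t + Σ_i C(t, r_i) < m ≤ t+1 + Σ_i C(t+1, r_i). Suppose every {r_1,...,r_l}-hypergraph G with m−t−1 edges on n vertices satisfies L(G) ≤ L(C_{m−t−1, {r_1,...,r_l}}). Then every {1, r_1, ..., r_l}-hypergraph H with m edges on n vertices satisfies L(H) ≤ L(C_{m, {1,r_1,...,r_l}}). -/

import Mathlib

open Finset

def simplexNat : Set (ℕ → ℝ) :=
  {x | (∀ i, 0 ≤ x i) ∧ ∃ n : ℕ, (∑ i ∈ Finset.range n, x i) = 1 ∧ ∀ i, n ≤ i → x i = 0}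

/-- Weighted Lagrangian polynomial: edges of cardinality r get weight `α r`. -/
def wLagN (α : ℕ → ℝ) (E : Finset (Finset ℕ)) (x : ℕ → ℝ) : ℝ :=
  ∑ e ∈ E, α e.card * ∏ v ∈ e, x v

def ColexLt (A B : Finset ℕ) : Prop :=
  ∃ k, k ∈ B ∧ k ∉ A ∧ ∀ j, k < j → (j ∈ A ↔ j ∈ B)

/-- `E` consists of the first `|E|` sets with cardinalities in `T` in colex order. -/
def IsColexInitial (T : Finset ℕ) (E : Finset (Finset ℕ)) : Prop :=
  (∀ e ∈ E, e.card ∈ T) ∧ ∀ A B : Finset ℕ, B ∈ E → A.card ∈ T → ColexLt A B → A ∈ E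

lemma simplex_sum_le {x : ℕ → ℝ} (hx : x ∈ simplexNat) (A : Finset ℕ) :
    ∑ i ∈ A, x i ≤ 1 := by
  obtain ⟨hx0, n₀, hsum, hzero⟩ := hx
  have h1 : ∑ i ∈ A, x i ≤ ∑ i ∈ A ∪ range n₀, x i :=
    sum_le_sum_of_subset_of_nonneg subset_union_left (fun i _ _ => hx0 i)
  have h2 : ∑ i ∈ A ∪ range n₀, x i = ∑ i ∈ range n₀, x i := by
    refine (sum_subset subset_union_right ?_).symm
    intro i _ hi
    exact hzero i (by simpa using hi)
  rw [h2, hsum] at h1; exact h1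
lemma simplex_le_one {x : ℕ → ℝ} (hx : x ∈ simplexNat) (i : ℕ) : x i ≤ 1 := by
  simpa using simplex_sum_le hx {i}
lemma simplex_nonempty : (simplexNat).Nonempty := by
  refine ⟨fun i => if i = 0 then 1 else 0, fun i => by positivity, 1, by simp, ?_⟩
  intro i hi
  have : i ≠ 0 := by omega
  simp [this]
lemma wLag_image_nonempty (α : ℕ → ℝ) (E : Finset (Finset ℕ)) :
    (wLagN α E '' simplexNat).Nonempty := simplex_nonempty.image _
lemma wLag_bddAbove (α : ℕ → ℝ) (E : Finset (Finset ℕ)) :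
    BddAbove (wLagN α E '' simplexNat) := by
  refine ⟨∑ e ∈ E, |α e.card|, ?_⟩
  rintro _ ⟨x, hx, rfl⟩
  refine sum_le_sum fun e _ => ?_
  have h0 : (0:ℝ) ≤ ∏ v ∈ e, x v := prod_nonneg fun v _ => hx.1 v
  have h1 : ∏ v ∈ e, x v ≤ 1 := prod_le_one (fun v _ => hx.1 v) (fun v _ => simplex_le_one hx v)
  calc α e.card * ∏ v ∈ e, x v ≤ |α e.card| * ∏ v ∈ e, x v := by
        exact mul_le_mul_of_nonneg_right (le_abs_self _) h0
    _ ≤ |α e.card| * 1 := mul_le_mul_of_nonneg_left h1 (abs_nonneg _)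
    _ = |α e.card| := mul_one _
lemma pow_aux {a b : ℝ} (ha : 0 ≤ a) (hb : 0 ≤ b) (k : ℕ) :
    a ^ (k+1) + (k+1) * a ^ k * b ≤ (a + b) ^ (k+1) := by
  induction k with
  | zero => simp
  | succ k ih =>
    have h1 : (a + b) ^ (k+2) = (a+b) * (a+b)^(k+1) := by ring
    have h2 : (a+b) * (a ^ (k+1) + (k+1) * a ^ k * b) ≤ (a+b) * (a+b)^(k+1) :=
      mul_le_mul_of_nonneg_left ih (by linarith)
    have hak : (0:ℝ) ≤ a ^ k := pow_nonneg ha k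
    have h4 : (a+b) * (a ^ (k+1) + ((k:ℝ)+1) * a ^ k * b)
        = a^(k+2) + ((k:ℝ)+2) * a^(k+1) * b + ((k:ℝ)+1) * (a^k * b^2) := by ring
    have h5 : (0:ℝ) ≤ ((k:ℝ)+1) * (a^k * b^2) := by positivity
    push_cast
    push_cast at h2
    nlinarith
lemma esymm_le {x : ℕ → ℝ} (hx0 : ∀ i, 0 ≤ x i) (V : Finset ℕ) (k : ℕ) :
    ∑ e ∈ V.powersetCard k, ∏ v ∈ e, x v ≤ (∑ v ∈ V, x v) ^ k / k.factorial := by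
  induction V using Finset.induction generalizing k with
  | empty =>
    cases k with
    | zero => simp
    | succ k =>
      have he : (∅ : Finset ℕ).powersetCard (k+1) = ∅ := by
        ext e
        simp [mem_powersetCard, subset_empty]
        rintro rfl; simp
      simp [he]
  | @insert a V ha ih =>
    cases k with
    | zero => simp
    | succ k =>
      rw [powersetCard_succ_insert ha]
      have hd : Disjoint (V.powersetCard (k+1)) ((V.powersetCard k).image (insert a)) := by
        rw [disjoint_left]
        intro e he hei
        obtain ⟨s, hs, rfl⟩ := mem_image.mp hei
        have : insert a s ⊆ V := (mem_powersetCard.mp he).1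
        exact ha (this (mem_insert_self a s))
      rw [sum_union hd]
      have himg : ∑ e ∈ (V.powersetCard k).image (insert a), ∏ v ∈ e, x v
          = x a * ∑ s ∈ V.powersetCard k, ∏ v ∈ s, x v := by
        rw [sum_image, mul_sum]
        · refine sum_congr rfl fun s hs => ?_
          have hsV : s ⊆ V := (mem_powersetCard.mp hs).1
          rw [prod_insert (fun h => ha (hsV h))]
        · intro s hs t ht hst
          have hsV : s ⊆ V := (mem_powersetCard.mp hs).1
          have htV : t ⊆ V := (mem_powersetCard.mp ht).1
          have h1 : erase (insert a s) a = erase (insert a t) a := by rw [hst]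
          rwa [erase_insert (fun h => ha (hsV h)), erase_insert (fun h => ha (htV h))] at h1
      rw [himg, sum_insert ha]
      set S := ∑ v ∈ V, x v with hS
      have hSn : 0 ≤ S := sum_nonneg fun v _ => hx0 v
      have h3 : x a * ∑ s ∈ V.powersetCard k, ∏ v ∈ s, x v ≤ x a * (S ^ k / k.factorial) :=
        mul_le_mul_of_nonneg_left (ih (k := k)) (hx0 a)
      have e1 : x a * (S ^ k / k.factorial) = ((k:ℝ)+1) * x a * S ^ k / (k+1).factorial := by
        rw [Nat.factorial_succ]
        push_cast
        have hfk : ((k.factorial : ℝ)) ≠ 0 := by positivity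
        field_simp
      have key : S ^ (k+1) / (k+1).factorial + ((k:ℝ)+1) * x a * S ^ k / (k+1).factorial
          ≤ (x a + S) ^ (k+1) / (k+1).factorial := by
        rw [← add_div, div_le_div_iff_of_pos_right (by positivity)]
        have := pow_aux hSn (hx0 a) k
        have h2 : (S + x a)^(k+1) = (x a + S)^(k+1) := by ring
        push_cast at this ⊢
        nlinarith [this, h2]
      calc ∑ e ∈ V.powersetCard (k+1), ∏ v ∈ e, x v + x a * ∑ s ∈ V.powersetCard k, ∏ v ∈ s, x v
          ≤ S ^ (k+1) / (k+1).factorial + x a * (S ^ k / k.factorial) := by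
            have := ih (k := k+1)
            linarith
        _ ≤ (x a + S) ^ (k+1) / (k+1).factorial := by rw [e1]; exact key
lemma star_bound (rs : Finset ℕ) (α : ℕ → ℝ)
    (hα : ∀ r ∈ rs, 0 < α r) (hsum : ∑ r ∈ rs, α r / ((r - 1).factorial : ℝ) ≤ 1)
    (n : ℕ) {x : ℕ → ℝ} (hx : x ∈ simplexNat)
    (F : Finset (Finset ℕ)) (hFc : ∀ e ∈ F, e.card ∈ rs) (hFs : ∀ e ∈ F, e ⊆ range n)
    (v : ℕ) :
    ∑ e ∈ F.filter (fun e => v ∈ e), α e.card * ∏ u ∈ e, x u ≤ x v := by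
  have hx0 := hx.1
  have hsplit : ∑ e ∈ F.filter (fun e => v ∈ e), α e.card * ∏ u ∈ e, x u
      = x v * ∑ e ∈ F.filter (fun e => v ∈ e), α e.card * ∏ u ∈ e.erase v, x u := by
    rw [mul_sum]
    refine sum_congr rfl fun e he => ?_
    have hv : v ∈ e := (mem_filter.mp he).2
    rw [← mul_prod_erase e x hv]
    ring
  rw [hsplit]
  have hT : ∑ e ∈ F.filter (fun e => v ∈ e), α e.card * ∏ u ∈ e.erase v, x u ≤ 1 := by
    set Fv := F.filter (fun e => v ∈ e) with hFv
    have hmaps : ∀ e ∈ Fv, e.card ∈ rs := fun e he => hFc e (mem_filter.mp he).1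
    rw [← Finset.sum_fiberwise_of_maps_to hmaps (fun e => α e.card * ∏ u ∈ e.erase v, x u)]
    refine le_trans (sum_le_sum fun r hr => ?_) hsum
    -- inner bound for card class r
    have hαr := hα r hr
    have hinner : ∑ e ∈ Fv.filter (fun e => e.card = r), α e.card * ∏ u ∈ e.erase v, x u
        = α r * ∑ e ∈ Fv.filter (fun e => e.card = r), ∏ u ∈ e.erase v, x u := by
      rw [mul_sum]
      refine sum_congr rfl fun e he => ?_
      rw [(mem_filter.mp he).2]
    rw [hinner]
    set A := Fv.filter (fun e => e.card = r) with hA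
    have himg : ∑ e ∈ A, ∏ u ∈ e.erase v, x u = ∑ s ∈ A.image (fun e => e.erase v), ∏ u ∈ s, x u := by
      rw [sum_image]
      intro e he e' he' hee
      have hv : v ∈ e := by
        have h1 : e ∈ Fv.filter (fun e => e.card = r) := he
        exact (mem_filter.mp (mem_filter.mp h1).1).2
      have hv' : v ∈ e' := by
        have h1 : e' ∈ Fv.filter (fun e => e.card = r) := he'
        exact (mem_filter.mp (mem_filter.mp h1).1).2
      rw [← insert_erase hv, ← insert_erase hv', show e.erase v = e'.erase v from hee]
    have hsub : A.image (fun e => e.erase v) ⊆ ((range n).erase v).powersetCard (r - 1) := by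
      intro s hs
      obtain ⟨e, he, rfl⟩ := mem_image.mp hs
      have he1 := mem_filter.mp he
      have he2 := mem_filter.mp he1.1
      have hv : v ∈ e := he2.2
      rw [mem_powersetCard]
      constructor
      · intro u hu
        have hu1 := mem_erase.mp hu
        exact mem_erase.mpr ⟨hu1.1, hFs e he2.1 hu1.2⟩
      · rw [card_erase_of_mem hv, he1.2]
    have hle : ∑ s ∈ A.image (fun e => e.erase v), ∏ u ∈ s, x u
        ≤ ∑ s ∈ ((range n).erase v).powersetCard (r - 1), ∏ u ∈ s, x u :=
      sum_le_sum_of_subset_of_nonneg hsub (fun s _ _ => prod_nonneg fun u _ => hx0 u)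
    have hes := esymm_le hx0 ((range n).erase v) (r - 1)
    have hS1 : ∑ u ∈ (range n).erase v, x u ≤ 1 := simplex_sum_le hx _
    have hS0 : (0:ℝ) ≤ ∑ u ∈ (range n).erase v, x u := sum_nonneg fun u _ => hx0 u
    have hpow : (∑ u ∈ (range n).erase v, x u) ^ (r-1) ≤ 1 := pow_le_one₀ hS0 hS1
    have hfin : ∑ s ∈ ((range n).erase v).powersetCard (r - 1), ∏ u ∈ s, x u
        ≤ 1 / ((r-1).factorial : ℝ) := by
      refine hes.trans ?_
      have : (0:ℝ) < ((r-1).factorial : ℝ) := by positivity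
      exact div_le_div_of_nonneg_right hpow this.le |>.trans_eq rfl
    calc α r * ∑ e ∈ A, ∏ u ∈ e.erase v, x u
        ≤ α r * (1 / ((r-1).factorial : ℝ)) := by
          refine mul_le_mul_of_nonneg_left ?_ hαr.le
          rw [himg]; exact hle.trans hfin
      _ = α r / ((r-1).factorial : ℝ) := by ring
  calc x v * ∑ e ∈ F.filter (fun e => v ∈ e), α e.card * ∏ u ∈ e.erase v, x u
      ≤ x v * 1 := mul_le_mul_of_nonneg_left hT (hx0 v)
    _ = x v := mul_one _
lemma pad_bound (rs : Finset ℕ) (α : ℕ → ℝ) (hα : ∀ r ∈ rs, 0 < α r)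
    (m t n : ℕ) (hm2 : m ≤ t + 1 + ∑ r ∈ rs, (t + 1).choose r) (hnt : t + 1 ≤ n)
    (L1 : ℝ)
    (hyp' : ∀ G : Finset (Finset ℕ), (∀ e ∈ G, e.card ∈ rs) →
      (∀ e ∈ G, e ⊆ range n) → G.card = m - t - 1 →
      ∀ y ∈ simplexNat, wLagN α G y ≤ L1)
    (F : Finset (Finset ℕ)) (hFc : ∀ e ∈ F, e.card ∈ rs) (hFs : ∀ e ∈ F, e ⊆ range n)
    (hcard : F.card ≤ m - t - 1) {x : ℕ → ℝ} (hx : x ∈ simplexNat) :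
    wLagN α F x ≤ L1 := by
  classical
  set Q := (range n).powerset.filter (fun e => e.card ∈ rs) with hQ
  have hFQ : F ⊆ Q := by
    intro e he
    exact mem_filter.mpr ⟨mem_powerset.mpr (hFs e he), hFc e he⟩
  set P := rs.biUnion (fun r => (range (t+1)).powersetCard r) with hP
  have hPQ : P ⊆ Q := by
    intro e he
    obtain ⟨r, hr, he2⟩ := mem_biUnion.mp he
    rw [mem_powersetCard] at he2
    refine mem_filter.mpr ⟨mem_powerset.mpr (he2.1.trans (range_subset_range.mpr hnt)), ?_⟩
    rw [he2.2]; exact hr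
  have hPcard : P.card = ∑ r ∈ rs, (t+1).choose r := by
    rw [hP, card_biUnion]
    · refine sum_congr rfl fun r _ => ?_
      rw [card_powersetCard, card_range]
    · intro r hr r' hr' hne
      simp only [Function.onFun]
      rw [disjoint_left]
      intro e he he'
      rw [mem_powersetCard] at he he'
      exact hne (he.2 ▸ he'.2 ▸ rfl)
  have hQcard : m - t - 1 ≤ Q.card := by
    have := card_le_card hPQ
    omega
  obtain ⟨G, hFG, hGQ, hGcard⟩ := Finset.exists_subsuperset_card_eq hFQ hcard hQcard
  have hGc : ∀ e ∈ G, e.card ∈ rs := fun e he => (mem_filter.mp (hGQ he)).2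
  have hGs : ∀ e ∈ G, e ⊆ range n := fun e he => mem_powerset.mp (mem_filter.mp (hGQ he)).1
  have hmono : wLagN α F x ≤ wLagN α G x := by
    refine sum_le_sum_of_subset_of_nonneg hFG fun e he _ => ?_
    exact mul_nonneg (hα e.card (hGc e he)).le (prod_nonneg fun u _ => hx.1 u)
  exact hmono.trans (hyp' G hGc hGs hGcard x hx)
lemma lemA (rs : Finset ℕ) (α : ℕ → ℝ)
    (hα : ∀ r ∈ rs, 0 < α r) (hsum : ∑ r ∈ rs, α r / ((r - 1).factorial : ℝ) ≤ 1)
    (m t n : ℕ)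
    (hm1 : t + ∑ r ∈ rs, t.choose r < m)
    (hm2 : m ≤ t + 1 + ∑ r ∈ rs, (t + 1).choose r) (hnt : t + 1 ≤ n)
    (L1 : ℝ)
    (hyp' : ∀ G : Finset (Finset ℕ), (∀ e ∈ G, e.card ∈ rs) →
      (∀ e ∈ G, e ⊆ range n) → G.card = m - t - 1 →
      ∀ y ∈ simplexNat, wLagN α G y ≤ L1) :
    ∀ k : ℕ, ∀ F : Finset (Finset ℕ), ∀ S : Finset ℕ, F.card ≤ k →
      (∀ e ∈ F, e.card ∈ rs) → (∀ e ∈ F, e ⊆ range n) →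
      S.card + F.card ≤ m → ∀ x ∈ simplexNat,
      (∑ v ∈ S, x v) + wLagN α F x ≤ 1 + L1 := by
  intro k
  induction k with
  | zero =>
    intro F S hk hFc hFs hSF x hx
    have h1 : wLagN α F x ≤ L1 :=
      pad_bound rs α hα m t n hm2 hnt L1 hyp' F hFc hFs (by omega) hx
    have h2 : ∑ v ∈ S, x v ≤ 1 := simplex_sum_le hx S
    linarith
  | succ k ih =>
    intro F S hk hFc hFs hSF x hx
    by_cases hle : F.card ≤ m - t - 1
    · have h1 : wLagN α F x ≤ L1 :=
        pad_bound rs α hα m t n hm2 hnt L1 hyp' F hFc hFs hle hx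
      have h2 : ∑ v ∈ S, x v ≤ 1 := simplex_sum_le hx S
      linarith
    · -- deletion step
      have hSt : S.card ≤ t := by omega
      -- find e ∈ F with a vertex outside S
      have hex : ∃ e ∈ F, ¬ e ⊆ S := by
        by_contra hcon
        push_neg at hcon
        have hFsub : F ⊆ rs.biUnion (fun r => S.powersetCard r) := by
          intro e he
          exact mem_biUnion.mpr ⟨e.card, hFc e he, mem_powersetCard.mpr ⟨hcon e he, rfl⟩⟩
        have h1 : F.card ≤ ∑ r ∈ rs, (S.powersetCard r).card :=
          le_trans (card_le_card hFsub) (card_biUnion_le)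
        have h2 : ∑ r ∈ rs, (S.powersetCard r).card ≤ ∑ r ∈ rs, t.choose r := by
          refine sum_le_sum fun r _ => ?_
          rw [card_powersetCard]
          exact Nat.choose_le_choose r hSt
        omega
      obtain ⟨e, heF, heS⟩ := hex
      obtain ⟨v, hve, hvS⟩ := not_subset.mp heS
      set F' := F.filter (fun e => v ∉ e) with hF'
      have hFlt : F'.card < F.card := by
        refine card_lt_card ⟨filter_subset _ _, fun hsub => ?_⟩
        have := mem_filter.mp (hsub heF)
        exact this.2 hve
      have hsplit : wLagN α F x
          = (∑ e ∈ F.filter (fun e => v ∈ e), α e.card * ∏ u ∈ e, x u) + wLagN α F' x := by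
        rw [wLagN, wLagN, ← sum_filter_add_sum_filter_not F (fun e => v ∈ e)]
      have hstar : ∑ e ∈ F.filter (fun e => v ∈ e), α e.card * ∏ u ∈ e, x u ≤ x v :=
        star_bound rs α hα hsum n hx F hFc hFs v
      have hrec : (∑ u ∈ insert v S, x u) + wLagN α F' x ≤ 1 + L1 := by
        refine ih F' (insert v S) (by omega) (fun e he => hFc e (filter_subset _ _ he))
          (fun e he => hFs e (filter_subset _ _ he)) ?_ x hx
        rw [card_insert_of_notMem hvS]
        omega
      rw [sum_insert hvS] at hrec
      have := simplex_sum_le hx S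
      linarith [hsplit, hstar]
lemma colex_trichotomy (A B : Finset ℕ) (h : A ≠ B) : ColexLt A B ∨ ColexLt B A := by
  classical
  set D := (A \ B) ∪ (B \ A) with hD
  have hDne : D.Nonempty := by
    rw [nonempty_iff_ne_empty]
    intro hcon
    apply h
    rw [hD, union_eq_empty, sdiff_eq_empty_iff_subset, sdiff_eq_empty_iff_subset] at hcon
    exact subset_antisymm hcon.1 hcon.2
  set k := D.max' hDne with hk
  have hkD : k ∈ D := max'_mem D hDne
  have hagree : ∀ j, k < j → (j ∈ A ↔ j ∈ B) := by
    intro j hj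
    have hjD : j ∉ D := fun hjD => absurd (le_max' D j hjD) (by omega)
    rw [hD, mem_union, mem_sdiff, mem_sdiff] at hjD
    push_neg at hjD
    exact ⟨hjD.1, hjD.2⟩
  rw [hD, mem_union, mem_sdiff, mem_sdiff] at hkD
  rcases hkD with ⟨hkA, hkB⟩ | ⟨hkB, hkA⟩
  · exact Or.inr ⟨k, hkA, hkB, fun j hj => (hagree j hj).symm⟩
  · exact Or.inl ⟨k, hkB, hkA, hagree⟩
lemma colexInit_subset {T : Finset ℕ} {E E' : Finset (Finset ℕ)}
    (hE : IsColexInitial T E) (hE' : IsColexInitial T E') (h : E.card ≤ E'.card) :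
    E ⊆ E' := by
  intro B hB
  by_contra hBn
  have hsub : E' ⊆ E := by
    intro A hA
    have hAB : A ≠ B := fun hh => hBn (hh ▸ hA)
    rcases colex_trichotomy A B hAB with h1 | h2
    · exact hE.2 A B hB (hE'.1 A hA) h1
    · exact absurd (hE'.2 B A hA (hE.1 B hB) h2) hBn
  have : E'.card < E.card := card_lt_card ⟨hsub, fun hc => hBn (hc hB)⟩
  omega
lemma colexInit_eq {T : Finset ℕ} {E E' : Finset (Finset ℕ)}
    (hE : IsColexInitial T E) (hE' : IsColexInitial T E') (h : E.card = E'.card) :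
    E = E' :=
  subset_antisymm (colexInit_subset hE hE' h.le) (colexInit_subset hE' hE h.ge)
lemma biUnion_pc_card (rs : Finset ℕ) (V : Finset ℕ) :
    (rs.biUnion (fun r => V.powersetCard r)).card = ∑ r ∈ rs, V.card.choose r := by
  rw [card_biUnion]
  · exact sum_congr rfl fun r _ => by rw [card_powersetCard]
  · intro r hr r' hr' hne
    simp only [Function.onFun]
    rw [disjoint_left]
    intro e he he'
    rw [mem_powersetCard] at he he'
    exact hne (he.2 ▸ he'.2 ▸ rfl)
lemma C1_subsets (rs : Finset ℕ) (hrs : ∀ r ∈ rs, 1 < r) (m t : ℕ)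
    (hm2 : m ≤ t + 1 + ∑ r ∈ rs, (t + 1).choose r)
    (C1 : Finset (Finset ℕ)) (hC1m : C1.card = m - t - 1) (hC1 : IsColexInitial rs C1) :
    ∀ e ∈ C1, e ⊆ range (t+1) := by
  intro e he
  by_contra hns
  obtain ⟨w, hwe, hw⟩ := not_subset.mp hns
  rw [mem_range] at hw
  push_neg at hw
  have hene : e.Nonempty := ⟨w, hwe⟩
  set P := rs.biUnion (fun r => (range (t+1)).powersetCard r) with hP
  have hPC1 : P ⊆ C1 := by
    intro A hA
    obtain ⟨r, hr, hA2⟩ := mem_biUnion.mp hA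
    rw [mem_powersetCard] at hA2
    have hcard : A.card ∈ rs := hA2.2 ▸ hr
    refine hC1.2 A e he hcard ?_
    refine ⟨e.max' hene, max'_mem e hene, ?_, ?_⟩
    · intro hmem
      have := mem_range.mp (hA2.1 hmem)
      have := le_max' e w hwe
      omega
    · intro j hj
      have hje : j ∉ e := fun hje => absurd (le_max' e j hje) (by omega)
      have hjA : j ∉ A := by
        intro hjA
        have := mem_range.mp (hA2.1 hjA)
        have := le_max' e w hwe
        omega
      exact iff_of_false hjA hje
  have heP : e ∉ P := by
    intro heP
    obtain ⟨r, hr, he2⟩ := mem_biUnion.mp heP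
    rw [mem_powersetCard] at he2
    exact absurd (mem_range.mp (he2.1 hwe)) (by omega)
  have hsub : insert e P ⊆ C1 := insert_subset he hPC1
  have hcard := card_le_card hsub
  rw [card_insert_of_notMem heP] at hcard
  have hPcard : P.card = ∑ r ∈ rs, (t+1).choose r := by
    rw [hP, biUnion_pc_card, card_range]
  omega
lemma C1_low (rs : Finset ℕ) (m t : ℕ)
    (hm1 : t + ∑ r ∈ rs, t.choose r < m)
    (C1 : Finset (Finset ℕ)) (hC1m : C1.card = m - t - 1) (hC1 : IsColexInitial rs C1) :
    ∀ A : Finset ℕ, A ⊆ range t → A.card ∈ rs → A ∈ C1 := by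
  intro A hAsub hAcard
  by_contra hA
  set P := rs.biUnion (fun r => (range t).powersetCard r) with hP
  have hC1P : C1 ⊆ P.erase A := by
    intro B hB
    have hBA : B ≠ A := fun hh => hA (hh ▸ hB)
    have hnAB : ¬ ColexLt A B := fun hcl => hA (hC1.2 A B hB hAcard hcl)
    have hBAlt : ColexLt B A := by
      rcases colex_trichotomy A B hBA.symm with h1 | h2
      · exact absurd h1 hnAB
      · exact h2
    obtain ⟨k, hkA, hkB, hk⟩ := hBAlt
    have hBsub : B ⊆ range t := by
      intro u hu
      rcases lt_or_ge k u with h | h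
      · exact hAsub ((hk u h).mp hu)
      · have := mem_range.mp (hAsub hkA)
        exact mem_range.mpr (by omega)
    refine mem_erase.mpr ⟨hBA, ?_⟩
    exact mem_biUnion.mpr ⟨B.card, hC1.1 B hB, mem_powersetCard.mpr ⟨hBsub, rfl⟩⟩
  have hAP : A ∈ P := mem_biUnion.mpr ⟨A.card, hAcard, mem_powersetCard.mpr ⟨hAsub, rfl⟩⟩
  have hcard := card_le_card hC1P
  rw [card_erase_of_mem hAP] at hcard
  have hPe : P.card = ∑ r ∈ rs, t.choose r := by
    rw [hP, biUnion_pc_card, card_range]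
  have hpos : 0 < P.card := card_pos.mpr ⟨A, hAP⟩
  rw [hPe] at hcard hpos
  omega
lemma C2_struct (rs : Finset ℕ) (hrs : ∀ r ∈ rs, 1 < r) (m t : ℕ)
    (hm1 : t + ∑ r ∈ rs, t.choose r < m)
    (hm2 : m ≤ t + 1 + ∑ r ∈ rs, (t + 1).choose r)
    (C1 : Finset (Finset ℕ)) (hC1m : C1.card = m - t - 1) (hC1 : IsColexInitial rs C1)
    (C2 : Finset (Finset ℕ)) (hC2m : C2.card = m) (hC2 : IsColexInitial (insert 1 rs) C2) :
    C2 = (range (t+1)).image (fun i => ({i} : Finset ℕ)) ∪ C1 := by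
  classical
  set D := (range (t+1)).image (fun i => ({i} : Finset ℕ)) ∪ C1 with hD
  have hdisj : Disjoint ((range (t+1)).image (fun i => ({i} : Finset ℕ))) C1 := by
    rw [disjoint_left]
    intro e he he'
    obtain ⟨i, _, rfl⟩ := mem_image.mp he
    have := hrs _ (hC1.1 _ he')
    simp at this
  have hDcard : D.card = m := by
    rw [hD, card_union_of_disjoint hdisj,
      card_image_of_injective _ Finset.singleton_injective, card_range, hC1m]
    omega
  have hDinit : IsColexInitial (insert 1 rs) D := by
    constructor
    · intro e he
      rcases mem_union.mp he with h | h
      · obtain ⟨i, _, rfl⟩ := mem_image.mp h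
        simp
      · exact mem_insert_of_mem (hC1.1 e h)
    · intro A B hB hAc hAB
      rcases mem_union.mp hB with hBi | hBC
      · obtain ⟨j, hj, rfl⟩ := mem_image.mp hBi
        rw [mem_range] at hj
        obtain ⟨k, hkB, hkA, hk⟩ := hAB
        rw [mem_singleton] at hkB
        subst hkB
        have hAsub : A ⊆ range k := by
          intro u hu
          rcases lt_or_ge k u with h | h
          · have := (hk u h).mp hu
            rw [mem_singleton] at this
            omega
          · rcases lt_or_eq_of_le h with h' | h'
            · exact mem_range.mpr h'
            · exact absurd (h' ▸ hu) hkA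
        rcases mem_insert.mp hAc with h1 | hrrs
        · obtain ⟨i, rfl⟩ := card_eq_one.mp h1
          have hik : i < k := mem_range.mp (hAsub (mem_singleton_self i))
          exact mem_union_left _ (mem_image.mpr ⟨i, mem_range.mpr (by omega), rfl⟩)
        · refine mem_union_right _ (C1_low rs m t hm1 C1 hC1m hC1 A ?_ hrrs)
          exact hAsub.trans (range_subset_range.mpr (by omega))
      · rcases mem_insert.mp hAc with h1 | hrrs
        · obtain ⟨i, rfl⟩ := card_eq_one.mp h1
          obtain ⟨k, hkB, hkA, hk⟩ := hAB
          have hBsub := C1_subsets rs hrs m t hm2 C1 hC1m hC1 B hBC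
          have hkt : k < t + 1 := mem_range.mp (hBsub hkB)
          have hit : i < t + 1 := by
            rcases le_or_gt i k with h | h
            · omega
            · have : i ∈ B := (hk i h).mp (mem_singleton_self i)
              exact mem_range.mp (hBsub this)
          exact mem_union_left _ (mem_image.mpr ⟨i, mem_range.mpr hit, rfl⟩)
        · exact mem_union_right _ (hC1.2 A B hBC hrrs hAB)
  exact colexInit_eq hC2 hDinit (hC2m.trans hDcard.symm)
lemma C2_lower (rs : Finset ℕ) (hrs : ∀ r ∈ rs, 1 < r) (α : ℕ → ℝ) (hα1 : α 1 = 1)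
    (hα : ∀ r ∈ rs, 0 < α r) (m t : ℕ)
    (hm1 : t + ∑ r ∈ rs, t.choose r < m)
    (hm2 : m ≤ t + 1 + ∑ r ∈ rs, (t + 1).choose r)
    (C1 : Finset (Finset ℕ)) (hC1m : C1.card = m - t - 1) (hC1 : IsColexInitial rs C1)
    (C2 : Finset (Finset ℕ)) (hC2m : C2.card = m) (hC2 : IsColexInitial (insert 1 rs) C2) :
    1 + sSup (wLagN α C1 '' simplexNat) ≤ sSup (wLagN α C2 '' simplexNat) := by
  classical
  have hstruct := C2_struct rs hrs m t hm1 hm2 C1 hC1m hC1 C2 hC2m hC2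
  have hdisj : Disjoint ((range (t+1)).image (fun i => ({i} : Finset ℕ))) C1 := by
    rw [disjoint_left]
    intro e he he'
    obtain ⟨i, _, rfl⟩ := mem_image.mp he
    have := hrs _ (hC1.1 _ he')
    simp at this
  have key : ∀ x ∈ simplexNat, 1 + wLagN α C1 x ≤ sSup (wLagN α C2 '' simplexNat) := by
    intro x hx
    set x' : ℕ → ℝ := fun i => if i < t then x i else if i = t then 1 - ∑ j ∈ range t, x j else 0
      with hx'def
    have hrt : ∑ j ∈ range t, x j ≤ 1 := simplex_sum_le hx _
    have hx'0 : ∀ i, 0 ≤ x' i := by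
      intro i
      rw [hx'def]
      dsimp only
      split_ifs with h1 h2
      · exact hx.1 i
      · linarith
      · exact le_rfl
    have hsum' : ∑ i ∈ range (t+1), x' i = 1 := by
      rw [sum_range_succ]
      have h1 : ∀ i ∈ range t, x' i = x i := by
        intro i hi
        rw [hx'def]
        simp [mem_range.mp hi]
      rw [sum_congr rfl h1]
      have h2 : x' t = 1 - ∑ j ∈ range t, x j := by
        rw [hx'def]; simp
      rw [h2]; ring
    have hx' : x' ∈ simplexNat := by
      refine ⟨hx'0, t+1, hsum', ?_⟩
      intro i hi
      rw [hx'def]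
      have h1 : ¬ i < t := by omega
      have h2 : i ≠ t := by omega
      simp [h1, h2]
    have hmono : ∀ v ∈ range (t+1), x v ≤ x' v := by
      intro v hv
      rw [mem_range] at hv
      rw [hx'def]
      dsimp only
      rcases lt_or_ge v t with h | h
      · simp [h]
      · have hvt : v = t := by omega
        have := simplex_sum_le hx (range (t+1))
        rw [sum_range_succ] at this
        subst hvt
        simp [lt_irrefl]
        linarith
    have hval : 1 + wLagN α C1 x ≤ wLagN α C2 x' := by
      rw [hstruct]
      simp only [wLagN]
      rw [sum_union hdisj]
      have h1 : ∑ e ∈ (range (t+1)).image (fun i => ({i} : Finset ℕ)),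
          α e.card * ∏ v ∈ e, x' v = 1 := by
        rw [sum_image (fun a _ b _ h => Finset.singleton_injective h)]
        calc ∑ i ∈ range (t+1), α ({i} : Finset ℕ).card * ∏ v ∈ ({i} : Finset ℕ), x' v
            = ∑ i ∈ range (t+1), x' i := by
              refine sum_congr rfl fun i _ => ?_
              rw [card_singleton, hα1, prod_singleton, one_mul]
          _ = 1 := hsum'
      have h2 : ∑ e ∈ C1, α e.card * ∏ v ∈ e, x v ≤ ∑ e ∈ C1, α e.card * ∏ v ∈ e, x' v := by
        refine sum_le_sum fun e he => ?_
        refine mul_le_mul_of_nonneg_left ?_ (hα e.card (hC1.1 e he)).le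
        refine prod_le_prod (fun v _ => hx.1 v) fun v hv => ?_
        exact hmono v (C1_subsets rs hrs m t hm2 C1 hC1m hC1 e he hv)
      rw [h1]
      linarith
    refine hval.trans (le_csSup (wLag_bddAbove α C2) ?_)
    exact Set.mem_image_of_mem _ hx'
  have h1 : sSup (wLagN α C1 '' simplexNat) ≤ sSup (wLagN α C2 '' simplexNat) - 1 := by
    refine csSup_le (wLag_image_nonempty _ _) ?_
    rintro _ ⟨x, hx, rfl⟩
    linarith [key x hx]
  linarith

theorem frankl_furedi_reduction {l : ℕ} (rs : Finset ℕ) (hl : rs.card = l)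
    (hrs : ∀ r ∈ rs, 1 < r) (α : ℕ → ℝ) (hα1 : α 1 = 1) (hα : ∀ r ∈ rs, 0 < α r)
    (hsum : ∑ r ∈ rs, α r / ((r - 1).factorial : ℝ) ≤ 1)
    (m t n : ℕ)
    (hm1 : t + ∑ r ∈ rs, t.choose r < m)
    (hm2 : m ≤ t + 1 + ∑ r ∈ rs, (t + 1).choose r)
    (C1 : Finset (Finset ℕ)) (hC1m : C1.card = m - t - 1) (hC1 : IsColexInitial rs C1)
    (C2 : Finset (Finset ℕ)) (hC2m : C2.card = m) (hC2 : IsColexInitial (insert 1 rs) C2)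
    (hyp : ∀ G : Finset (Finset ℕ), (∀ e ∈ G, e.card ∈ rs) →
      (∀ e ∈ G, e ⊆ Finset.range n) → G.card = m - t - 1 →
      sSup (wLagN α G '' simplexNat) ≤ sSup (wLagN α C1 '' simplexNat)) :
    ∀ H : Finset (Finset ℕ), (∀ e ∈ H, e.card ∈ insert 1 rs) →
      (∀ e ∈ H, e ⊆ Finset.range n) → H.card = m →
      sSup (wLagN α H '' simplexNat) ≤ sSup (wLagN α C2 '' simplexNat) := by
  classical
  intro H hHc hHs hHm
  have h1rs : (1 : ℕ) ∉ rs := fun h => absurd (hrs 1 h) (by omega)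
  -- n is at least t+1
  have hnt : t + 1 ≤ n := by
    by_contra hcon
    push_neg at hcon
    have hnle : n ≤ t := by omega
    have hHsub : H ⊆ (insert 1 rs).biUnion (fun r => (range n).powersetCard r) := by
      intro e he
      exact mem_biUnion.mpr ⟨e.card, hHc e he, mem_powersetCard.mpr ⟨hHs e he, rfl⟩⟩
    have h1 : H.card ≤ ∑ r ∈ insert 1 rs, ((range n).powersetCard r).card :=
      le_trans (card_le_card hHsub) card_biUnion_le
    have h2 : ∑ r ∈ insert 1 rs, ((range n).powersetCard r).card
        = n.choose 1 + ∑ r ∈ rs, n.choose r := by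
      rw [sum_insert h1rs]
      congr 1
      · rw [card_powersetCard, card_range]
      · exact sum_congr rfl fun r _ => by rw [card_powersetCard, card_range]
    have h3 : ∑ r ∈ rs, n.choose r ≤ ∑ r ∈ rs, t.choose r :=
      sum_le_sum fun r _ => Nat.choose_le_choose r hnle
    have h4 : n.choose 1 = n := Nat.choose_one_right n
    omega
  set L1 := sSup (wLagN α C1 '' simplexNat) with hL1
  have hyp' : ∀ G : Finset (Finset ℕ), (∀ e ∈ G, e.card ∈ rs) →
      (∀ e ∈ G, e ⊆ range n) → G.card = m - t - 1 →
      ∀ y ∈ simplexNat, wLagN α G y ≤ L1 := by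
    intro G h1 h2 h3 y hy
    exact (le_csSup (wLag_bddAbove α G) (Set.mem_image_of_mem _ hy)).trans (hyp G h1 h2 h3)
  set S := (range n).filter (fun v => ({v} : Finset ℕ) ∈ H) with hS
  set H1 := H.filter (fun e => e.card = 1) with hH1def
  set Hr := H.filter (fun e => ¬ e.card = 1) with hHrdef
  have hH1 : H1 = S.image (fun v => ({v} : Finset ℕ)) := by
    ext e
    constructor
    · intro he
      have h1 := mem_filter.mp he
      obtain ⟨v, rfl⟩ := card_eq_one.mp h1.2
      refine mem_image.mpr ⟨v, ?_, rfl⟩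
      exact mem_filter.mpr ⟨hHs _ h1.1 (mem_singleton_self v), h1.1⟩
    · intro he
      obtain ⟨v, hv, rfl⟩ := mem_image.mp he
      have h1 := mem_filter.mp hv
      exact mem_filter.mpr ⟨h1.2, card_singleton v⟩
  have hcardsum : S.card + Hr.card ≤ m := by
    have h1 : H1.card + Hr.card = m := by
      rw [hH1def, hHrdef, card_filter_add_card_filter_not, hHm]
    have h2 : H1.card = S.card := by
      rw [hH1, card_image_of_injective _ Finset.singleton_injective]
    omega
  have hHrc : ∀ e ∈ Hr, e.card ∈ rs := by
    intro e he
    have h1 := mem_filter.mp he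
    rcases mem_insert.mp (hHc e h1.1) with h | h
    · exact absurd h h1.2
    · exact h
  have hHrs : ∀ e ∈ Hr, e ⊆ range n := fun e he => hHs e (mem_filter.mp he).1
  -- pointwise bound
  have hpoint : ∀ x ∈ simplexNat, wLagN α H x ≤ 1 + L1 := by
    intro x hx
    have hsplit : wLagN α H x = wLagN α H1 x + wLagN α Hr x := by
      rw [wLagN, wLagN, wLagN, hH1def, hHrdef, sum_filter_add_sum_filter_not]
    have hones : wLagN α H1 x = ∑ v ∈ S, x v := by
      rw [wLagN, hH1, sum_image (fun a _ b _ h => Finset.singleton_injective h)]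
      refine sum_congr rfl fun v _ => ?_
      rw [card_singleton, hα1, prod_singleton, one_mul]
    have := lemA rs α hα hsum m t n hm1 hm2 hnt L1 hyp' Hr.card Hr S le_rfl hHrc hHrs
      hcardsum x hx
    rw [hsplit, hones]
    linarith
  refine csSup_le (wLag_image_nonempty α H) ?_
  rintro _ ⟨x, hx, rfl⟩
  have h2 := C2_lower rs hrs α hα1 hα m t hm1 hm2 C1 hC1m hC1 C2 hC2m hC2
  linarith [hpoint x hx]
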